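/- Let X be a complex inner product space. Define the standard 2-inner product (x,y|z) := ⟨x,y⟩·‖z‖² − ⟨x,z⟩·⟨z,y⟩ for x, y, z ∈ X. Then for all x, y, z ∈ X, the Cauchy–Bunyakovsky–Schwarz inequality |(x,y|z)|² ≤ (x,x|z)·(y,y|z) holds; that is, |⟨x,y⟩·‖z‖² − ⟨x,z⟩·⟨z,y⟩|² ≤ (‖x‖²·‖z‖² − |⟨x,z⟩|²)·(‖y‖²·‖z‖² − |⟨y,z⟩|²). -/

import Mathlib

open scoped InnerProductSpace

theorem two_inner_cbs {X : Type*} [NormedAddCommGroup X]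
    [InnerProductSpace ℂ X] (x y z : X) :
    ‖⟪y, x⟫_ℂ * (‖z‖ : ℂ) ^ 2 - ⟪z, x⟫_ℂ * ⟪y, z⟫_ℂ‖ ^ 2 ≤
      (‖x‖ ^ 2 * ‖z‖ ^ 2 - ‖⟪z, x⟫_ℂ‖ ^ 2) *
        (‖y‖ ^ 2 * ‖z‖ ^ 2 - ‖⟪z, y⟫_ℂ‖ ^ 2) := by
  rcases eq_or_ne z 0 with hz | hz
  · simp [hz]
  have hzz : ⟪z, z⟫_ℂ = (‖z‖ : ℂ) ^ 2 := by
    rw [inner_self_eq_norm_sq_to_K]; norm_num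
  have hxx : ⟪x, x⟫_ℂ = (‖x‖ : ℂ) ^ 2 := by
    rw [inner_self_eq_norm_sq_to_K]; norm_num
  have hyy : ⟪y, y⟫_ℂ = (‖y‖ : ℂ) ^ 2 := by
    rw [inner_self_eq_norm_sq_to_K]; norm_num
  have hconjx : ⟪z, x⟫_ℂ * ⟪x, z⟫_ℂ = (‖⟪z, x⟫_ℂ‖ : ℂ) ^ 2 := by
    rw [← inner_conj_symm x z, Complex.mul_conj']
  have hconjy : ⟪z, y⟫_ℂ * ⟪y, z⟫_ℂ = (‖⟪z, y⟫_ℂ‖ : ℂ) ^ 2 := by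
    rw [← inner_conj_symm y z, Complex.mul_conj']
  set u : X := ((‖z‖ : ℂ) ^ 2) • x - ⟪z, x⟫_ℂ • z with hu
  set v : X := ((‖z‖ : ℂ) ^ 2) • y - ⟪z, y⟫_ℂ • z with hv
  have hvu : ⟪v, u⟫_ℂ =
      (‖z‖ : ℂ) ^ 2 * (⟪y, x⟫_ℂ * (‖z‖ : ℂ) ^ 2 - ⟪z, x⟫_ℂ * ⟪y, z⟫_ℂ) := by
    simp only [hu, hv, inner_sub_left, inner_sub_right, inner_smul_left,
      inner_smul_right, hzz, map_pow, Complex.conj_ofReal, inner_conj_symm]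
    ring
  have huu : ⟪u, u⟫_ℂ =
      ((‖z‖ ^ 2 * (‖x‖ ^ 2 * ‖z‖ ^ 2 - ‖⟪z, x⟫_ℂ‖ ^ 2) : ℝ) : ℂ) := by
    simp only [hu, inner_sub_left, inner_sub_right, inner_smul_left,
      inner_smul_right, hzz, hxx, map_pow, Complex.conj_ofReal, inner_conj_symm]
    push_cast
    rw [show ((‖⟪z, x⟫_ℂ‖ : ℂ)) ^ 2 = ⟪z, x⟫_ℂ * ⟪x, z⟫_ℂ from hconjx.symm]
    ring
  have hvv : ⟪v, v⟫_ℂ =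
      ((‖z‖ ^ 2 * (‖y‖ ^ 2 * ‖z‖ ^ 2 - ‖⟪z, y⟫_ℂ‖ ^ 2) : ℝ) : ℂ) := by
    simp only [hv, inner_sub_left, inner_sub_right, inner_smul_left,
      inner_smul_right, hzz, hyy, map_pow, Complex.conj_ofReal, inner_conj_symm]
    push_cast
    rw [show ((‖⟪z, y⟫_ℂ‖ : ℂ)) ^ 2 = ⟪z, y⟫_ℂ * ⟪y, z⟫_ℂ from hconjy.symm]
    ring
  have hnu : ‖u‖ ^ 2 = ‖z‖ ^ 2 * (‖x‖ ^ 2 * ‖z‖ ^ 2 - ‖⟪z, x⟫_ℂ‖ ^ 2) := by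
    have h := InnerProductSpace.norm_sq_eq_re_inner (𝕜 := ℂ) u
    rw [huu] at h
    simpa only [RCLike.re_to_complex, Complex.ofReal_re] using h
  have hnv : ‖v‖ ^ 2 = ‖z‖ ^ 2 * (‖y‖ ^ 2 * ‖z‖ ^ 2 - ‖⟪z, y⟫_ℂ‖ ^ 2) := by
    have h := InnerProductSpace.norm_sq_eq_re_inner (𝕜 := ℂ) v
    rw [hvv] at h
    simpa only [RCLike.re_to_complex, Complex.ofReal_re] using h
  have hcs : ‖⟪v, u⟫_ℂ‖ ^ 2 ≤ ‖v‖ ^ 2 * ‖u‖ ^ 2 := by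
    have h := norm_inner_le_norm (𝕜 := ℂ) v u
    have h2 : ‖⟪v, u⟫_ℂ‖ ^ 2 ≤ (‖v‖ * ‖u‖) ^ 2 :=
      pow_le_pow_left₀ (norm_nonneg _) h 2
    simpa [mul_pow] using h2
  rw [hvu] at hcs
  have habs : ‖(‖z‖ : ℂ) ^ 2 * (⟪y, x⟫_ℂ * (‖z‖ : ℂ) ^ 2 - ⟪z, x⟫_ℂ * ⟪y, z⟫_ℂ)‖
      = ‖z‖ ^ 2 * ‖⟪y, x⟫_ℂ * (‖z‖ : ℂ) ^ 2 - ⟪z, x⟫_ℂ * ⟪y, z⟫_ℂ‖ := by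
    rw [norm_mul, norm_pow, Complex.norm_real, norm_norm]
  rw [habs, hnu, hnv, mul_pow] at hcs
  have hzpos : (0 : ℝ) < ‖z‖ := norm_pos_iff.mpr hz
  have hz4 : (0 : ℝ) < (‖z‖ ^ 2) ^ 2 := by positivity
  have h3 : (‖z‖ ^ 2) ^ 2 *
      (‖⟪y, x⟫_ℂ * (‖z‖ : ℂ) ^ 2 - ⟪z, x⟫_ℂ * ⟪y, z⟫_ℂ‖ ^ 2) ≤
      (‖z‖ ^ 2) ^ 2 *
      ((‖x‖ ^ 2 * ‖z‖ ^ 2 - ‖⟪z, x⟫_ℂ‖ ^ 2) *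
        (‖y‖ ^ 2 * ‖z‖ ^ 2 - ‖⟪z, y⟫_ℂ‖ ^ 2)) := by
    nlinarith [hcs]
  exact le_of_mul_le_mul_left h3 hz4
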